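/- If a > 0, b ∈ ℝ and c := a‖R_{a+ib}‖ ≥ 1, then with r = a(1 − 1/c) one has N(t) ≥ min{e^{rt}, c} for all t ≥ 0. -/

import Mathlib

open MeasureTheory Filter Set

/-- Integral of a decaying exponential over `(0, ∞)`. -/
lemma aux_exp_integral {b : ℝ} (hb : 0 < b) :
    (∫ x in Set.Ioi (0:ℝ), Real.exp (-b * x)) = 1 / b := by
  have h := integral_comp_mul_left_Ioi (fun x => Real.exp (-x)) 0 hb
  simp only [mul_zero, integral_exp_neg_Ioi, neg_zero, Real.exp_zero,
    smul_eq_mul, mul_one] at h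
  calc (∫ x in Set.Ioi (0:ℝ), Real.exp (-b * x))
      = ∫ x in Set.Ioi (0:ℝ), Real.exp (-(b * x)) := by
        simp only [neg_mul]
    _ = b⁻¹ := h
    _ = 1 / b := (one_div b).symm

/-- Weighted concavity of the logarithm, in multiplied-out form. -/
lemma aux_log_concave {a r m : ℝ} (ha : 0 < a) (hr0 : 0 < r) (hra : r < a)
    (hm0 : 0 ≤ m) (hmr : m ≤ r) :
    m * Real.log (a - r) + (r - m) * Real.log a ≤ r * Real.log (a - m) := by
  have har : (0:ℝ) < a - r := by linarith
  have h := strictConcaveOn_log_Ioi.concaveOn.2 (Set.mem_Ioi.mpr har)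
      (Set.mem_Ioi.mpr ha) (div_nonneg hm0 hr0.le)
      (div_nonneg (by linarith : (0:ℝ) ≤ r - m) hr0.le)
      (by field_simp; ring)
  simp only [smul_eq_mul] at h
  rw [show m / r * (a - r) + (r - m) / r * a = a - m by field_simp; ring] at h
  have h2 : m * Real.log (a - r) + (r - m) * Real.log a
      = r * (m / r * Real.log (a - r) + (r - m) / r * Real.log a) := by
    field_simp
  rw [h2]
  exact mul_le_mul_of_nonneg_left h hr0.le

/-- If `limsup u(t)/t = 0` (in `EReal`) and `u t ≤ C + δ t` for all `t ≥ 0`, then `δ ≥ 0`. -/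
lemma aux_slope_nonneg (u : ℝ → ℝ)
    (hω₀ : Filter.limsup (fun t : ℝ => ((u t / t : ℝ) : EReal)) Filter.atTop = 0)
    (C δ : ℝ) (hmaj : ∀ s : ℝ, 0 ≤ s → u s ≤ C + δ * s) : 0 ≤ δ := by
  by_contra hδ
  push_neg at hδ
  have hev : ∀ᶠ t : ℝ in atTop, ((u t / t : ℝ) : EReal) ≤ ((δ/2 : ℝ) : EReal) := by
    filter_upwards [eventually_ge_atTop (max 1 (|C| / (-(δ/2))))] with t ht
    have ht1 : (1:ℝ) ≤ t := le_trans (le_max_left _ _) ht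
    have htpos : (0:ℝ) < t := lt_of_lt_of_le one_pos ht1
    have hpos : (0:ℝ) < -(δ/2) := by linarith
    have h2 : |C| / (-(δ/2)) ≤ t := le_trans (le_max_right _ _) ht
    have hC : C ≤ (-(δ/2)) * t := by
      have h3 : |C| ≤ (-(δ/2)) * t := by
        rw [div_le_iff₀ hpos] at h2
        linarith [mul_comm (|C| / (-(δ/2))) (-(δ/2))]
      exact le_trans (le_abs_self C) h3
    have hb : u t / t ≤ δ/2 := by
      rw [div_le_iff₀ htpos]
      have := hmaj t htpos.le
      nlinarith
    exact_mod_cast EReal.coe_le_coe_iff.mpr hb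
  have hls := Filter.limsup_le_of_le (by isBoundedDefault) hev
  rw [hω₀] at hls
  have h0 : ((0:ℝ) : EReal) ≤ ((δ/2 : ℝ) : EReal) := by
    simpa using hls
  have : (0:ℝ) ≤ δ/2 := EReal.coe_le_coe_iff.mp h0
  linarith

/-- If `a > 0`, `b ∈ ℝ` and `c := a ‖R_{a+ib}‖ ≥ 1`, then with
`r = a (1 − 1/c)` one has `N t ≥ min (e^{rt}) c` for all `t ≥ 0`, where `N = exp ν`
is the upper log-concave envelope of `t ↦ ‖T t‖` and `ω₀ = 0`. -/
theorem stmt_4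
    {B : Type*} [NormedAddCommGroup B] [NormedSpace ℂ B] [CompleteSpace B]
    (T : ℝ → (B →L[ℂ] B))
    (hT0 : ‖T 0‖ = 1)
    (hcont : ∀ f : B, ContinuousOn (fun t => T t f) (Set.Ici (0:ℝ)))
    (Mb ωb : ℝ) (hbound : ∀ t : ℝ, 0 ≤ t → ‖T t‖ ≤ Mb * Real.exp (ωb * t))
    (hω₀ : Filter.limsup (fun t : ℝ => ((Real.log ‖T t‖ / t : ℝ) : EReal)) Filter.atTop = 0)
    (ν : ℝ → ℝ)
    (hν_concave : ConcaveOn ℝ (Set.Ici (0:ℝ)) ν)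
    (hν_ge : ∀ t : ℝ, 0 ≤ t → Real.log ‖T t‖ ≤ ν t)
    (hν_min : ∀ κ : ℝ → ℝ, ConcaveOn ℝ (Set.Ici (0:ℝ)) κ →
        (∀ t : ℝ, 0 ≤ t → Real.log ‖T t‖ ≤ κ t) → ∀ t : ℝ, 0 ≤ t → ν t ≤ κ t)
    (R : ℂ → (B →L[ℂ] B))
    (hRint : ∀ z : ℂ, 0 < z.re → ∀ f : B,
      MeasureTheory.IntegrableOn (fun s : ℝ => Complex.exp (-(z * s)) • T s f) (Set.Ioi 0))
    (hR : ∀ z : ℂ, 0 < z.re → ∀ f : B,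
      R z f = ∫ s in Set.Ioi (0:ℝ), Complex.exp (-(z * s)) • T s f)
    (a b : ℝ) (ha : 0 < a) (c : ℝ)
    (hc : c = a * ‖R (a + b * Complex.I)‖) (hc1 : 1 ≤ c) :
    ∀ t : ℝ, 0 ≤ t →
      min (Real.exp (a * (1 - 1/c) * t)) c ≤ Real.exp (ν t) := by
  intro t₀ ht₀
  by_contra hcon
  push_neg at hcon
  rw [lt_min_iff] at hcon
  obtain ⟨hlt1, hlt2⟩ := hcon
  set r : ℝ := a * (1 - 1/c) with hr_def
  have hc0 : (0:ℝ) < c := lt_of_lt_of_le one_pos hc1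
  have hν0 : 0 ≤ ν 0 := by
    have h := hν_ge 0 le_rfl
    rwa [hT0, Real.log_one] at h
  have hL2 : ν t₀ < Real.log c := (Real.lt_log_iff_exp_lt hc0).mpr hlt2
  have hL1 : ν t₀ < r * t₀ := Real.exp_lt_exp.mp hlt1
  have ht₀pos : 0 < t₀ := by
    rcases ht₀.lt_or_eq with h | h
    · exact h
    · exfalso
      rw [← h, mul_zero] at hL1
      linarith
  -- the set of right chord slopes of ν at t₀
  set S : Set ℝ := (fun s => (ν s - ν t₀) / (s - t₀)) '' (Set.Ioi t₀) with hS_def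
  have hS_ne : S.Nonempty := ⟨_, ⟨t₀ + 1, by simp, rfl⟩⟩
  have hub : ∀ q ∈ S, q ≤ (ν t₀ - ν 0) / (t₀ - 0) := by
    rintro q ⟨s, hs, rfl⟩
    exact hν_concave.slope_anti_adjacent (le_refl (0:ℝ))
      (le_of_lt (lt_of_le_of_lt ht₀ hs)) ht₀pos hs
  have hbdd : BddAbove S := ⟨_, hub⟩
  set m : ℝ := sSup S with hm_def
  have hm_le : m ≤ (ν t₀ - ν 0) / (t₀ - 0) := csSup_le hS_ne hub
  have hm_t₀ : m * t₀ ≤ ν t₀ := by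
    rw [sub_zero] at hm_le
    have h := (le_div_iff₀ ht₀pos).mp hm_le
    linarith
  -- supporting line for ν at t₀
  have hsupp : ∀ s : ℝ, 0 ≤ s → ν s ≤ ν t₀ + m * (s - t₀) := by
    intro s hs
    rcases lt_trichotomy s t₀ with h | h | h
    · have hub2 : ∀ q ∈ S, q ≤ (ν t₀ - ν s) / (t₀ - s) := by
        rintro q ⟨z, hz, rfl⟩
        exact hν_concave.slope_anti_adjacent hs (le_of_lt (lt_of_le_of_lt ht₀ hz)) h hz
      have hm2 : m ≤ (ν t₀ - ν s) / (t₀ - s) := csSup_le hS_ne hub2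
      have h3 : m * (t₀ - s) ≤ ν t₀ - ν s := (le_div_iff₀ (by linarith)).mp hm2
      nlinarith
    · rw [h]; simp
    · have hmem : (ν s - ν t₀) / (s - t₀) ∈ S := ⟨s, h, rfl⟩
      have h2 : (ν s - ν t₀) / (s - t₀) ≤ m := le_csSup hbdd hmem
      have h3 : ν s - ν t₀ ≤ m * (s - t₀) := (div_le_iff₀ (by linarith)).mp h2
      linarith
  have hm0 : 0 ≤ m := by
    refine aux_slope_nonneg (fun t => Real.log ‖T t‖) hω₀ (ν t₀ - m * t₀) m ?_
    intro s hs
    have h1 := (hν_ge s hs).trans (hsupp s hs)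
    nlinarith
  have hmr : m < r := by
    have h1 : m * t₀ < r * t₀ := lt_of_le_of_lt hm_t₀ hL1
    exact lt_of_mul_lt_mul_right h1 ht₀pos.le
  have hrc : a - r = a / c := by
    rw [hr_def]; field_simp; ring
  have hra : r < a := by
    have h1 : (0:ℝ) < a / c := div_pos ha hc0
    linarith
  have hma : m < a := hmr.trans hra
  have ham : (0:ℝ) < a - m := by linarith
  -- resolvent norm bound: ‖R z‖ ≤ exp (ν t₀ - m t₀) / (a - m)
  set z : ℂ := a + b * Complex.I with hz_def
  have hzre : z.re = a := by
    simp [hz_def, Complex.add_re, Complex.mul_re]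
  have hz : 0 < z.re := by rw [hzre]; exact ha
  have hK0 : 0 ≤ Real.exp (ν t₀ - m * t₀) / (a - m) := by positivity
  have hRle : ‖R z‖ ≤ Real.exp (ν t₀ - m * t₀) / (a - m) := by
    apply ContinuousLinearMap.opNorm_le_bound _ hK0
    intro f
    rw [hR z hz f]
    have hint2 : IntegrableOn
        (fun s : ℝ => Real.exp (ν t₀ - m * t₀) * Real.exp (-(a - m) * s) * ‖f‖)
        (Set.Ioi (0:ℝ)) :=
      (((exp_neg_integrableOn_Ioi 0 ham).const_mul _).mul_const _)
    calc ‖∫ s in Set.Ioi (0:ℝ), Complex.exp (-(z * s)) • T s f‖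
        ≤ ∫ s in Set.Ioi (0:ℝ), ‖Complex.exp (-(z * s)) • T s f‖ :=
          norm_integral_le_integral_norm _
      _ ≤ ∫ s in Set.Ioi (0:ℝ),
            Real.exp (ν t₀ - m * t₀) * Real.exp (-(a - m) * s) * ‖f‖ := by
          refine setIntegral_mono_on ((hRint z hz f).norm) hint2 measurableSet_Ioi ?_
          intro s hs
          have hs0 : (0:ℝ) < s := hs
          have h1 : ‖Complex.exp (-(z * s))‖ = Real.exp (-(a * s)) := by
            rw [Complex.norm_exp]
            congr 1
            simp [hz_def, Complex.mul_re]
          have hTs : ‖T s‖ ≤ Real.exp (ν s) := by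
            rcases (norm_nonneg (T s)).eq_or_lt with h | h
            · rw [← h]; exact (Real.exp_pos _).le
            · exact (Real.log_le_iff_le_exp h).mp (hν_ge s hs0.le)
          have h2 : ‖T s f‖ ≤ Real.exp (ν s) * ‖f‖ :=
            le_trans ((T s).le_opNorm f) (mul_le_mul_of_nonneg_right hTs (norm_nonneg f))
          have h3 : Real.exp (ν s) ≤ Real.exp (ν t₀ + m * (s - t₀)) :=
            Real.exp_le_exp.mpr (hsupp s hs0.le)
          have h4 : Real.exp (-(a * s)) * Real.exp (ν t₀ + m * (s - t₀))
              = Real.exp (ν t₀ - m * t₀) * Real.exp (-(a - m) * s) := by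
            rw [← Real.exp_add, ← Real.exp_add]; ring_nf
          rw [norm_smul, h1]
          calc Real.exp (-(a * s)) * ‖T s f‖
              ≤ Real.exp (-(a * s)) * (Real.exp (ν s) * ‖f‖) :=
                mul_le_mul_of_nonneg_left h2 (Real.exp_pos _).le
            _ ≤ Real.exp (-(a * s)) * (Real.exp (ν t₀ + m * (s - t₀)) * ‖f‖) := by
                have := mul_le_mul_of_nonneg_right h3 (norm_nonneg f)
                exact mul_le_mul_of_nonneg_left this (Real.exp_pos _).le
            _ = Real.exp (ν t₀ - m * t₀) * Real.exp (-(a - m) * s) * ‖f‖ := by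
                rw [← mul_assoc, h4]
      _ = Real.exp (ν t₀ - m * t₀) / (a - m) * ‖f‖ := by
          rw [show (fun s : ℝ => Real.exp (ν t₀ - m * t₀) * Real.exp (-(a - m) * s) * ‖f‖)
              = fun s : ℝ => (Real.exp (ν t₀ - m * t₀) * ‖f‖) * Real.exp (-(a - m) * s) by
            funext s; ring]
          rw [MeasureTheory.integral_const_mul, aux_exp_integral ham]
          ring
  have hfinal : c ≤ a * (Real.exp (ν t₀ - m * t₀) / (a - m)) := by
    rw [hc]
    exact mul_le_mul_of_nonneg_left hRle ha.le
  have hlogc : Real.log c ≤ Real.log a + (ν t₀ - m * t₀) - Real.log (a - m) := by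
    have h1 : Real.log c ≤ Real.log (a * (Real.exp (ν t₀ - m * t₀) / (a - m))) :=
      Real.log_le_log hc0 hfinal
    rw [Real.log_mul ha.ne' (by positivity),
      Real.log_div (Real.exp_pos _).ne' ham.ne', Real.log_exp] at h1
    linarith
  have hr0 : 0 < r := by nlinarith [mul_nonneg hm0 ht₀pos.le]
  have hlogc_eq : Real.log c = Real.log a - Real.log (a - r) := by
    have h1 : Real.log (a / c) = Real.log a - Real.log c := Real.log_div ha.ne' hc0.ne'
    rw [← hrc] at h1
    linarith
  have hkey := aux_log_concave ha hr0 hra hm0 hmr.le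
  rcases le_or_gt (r * t₀) (Real.log c) with hcase | hcase
  · -- Case A : r t₀ ≤ log c
    have e1 : Real.log c < Real.log a + r * t₀ - m * t₀ - Real.log (a - m) := by
      linarith
    have e2 := mul_lt_mul_of_pos_left e1 hr0
    have F1 := mul_le_mul_of_nonneg_left hcase (show (0:ℝ) ≤ r - m by linarith)
    have e3 : m * Real.log c = m * Real.log a - m * Real.log (a - r) := by
      rw [hlogc_eq]; ring
    linarith [e2, hkey, F1, e3]
  · -- Case B : log c < r t₀
    have e4 := mul_le_mul_of_nonneg_left hlogc hr0.le
    have e5 := mul_le_mul_of_nonneg_left hcase.le hm0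
    have e3 : m * Real.log c = m * Real.log a - m * Real.log (a - r) := by
      rw [hlogc_eq]; ring
    have e6 := mul_lt_mul_of_pos_left hL2 hr0
    linarith [e4, hkey, e5, e3, e6]
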